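/- Monotonicity of the unimodal kneading coordinate: Let f : I → I be continuous on an interval I with a single minimum at c (so f is strictly decreasing on I ∩ (−∞, c] and strictly increasing on I ∩ [c, ∞)). Define σ(x) = 0 if x = c, σ(x) = 1 if x > c, σ(x) = −1 if x < c, and for x ∈ I define k(x) = Σ_{h≥0} σ(x₀)σ(x₁)···σ(x_h)/2^{h+1} where x₀ = x and x_{j+1} = f(x_j). Then x < y implies k(x) ≤ k(y). -/

import Mathlib

open Finset

/-- The sign coordinate for a unimodal map with minimum at `c`. -/
noncomputable def kneadingSign (c x : ℝ) : ℝ :=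
  if x = c then 0 else if c < x then 1 else -1

/-- The kneading coordinate `k(x) = Σ_{h≥0} σ(x₀)σ(x₁)⋯σ(x_h)/2^{h+1}`
along the orbit `x₀ = x`, `x_{j+1} = f(x_j)`. -/
noncomputable def kneadingCoord (f : ℝ → ℝ) (c x : ℝ) : ℝ :=
  ∑' h : ℕ, (∏ j ∈ Finset.range (h + 1), kneadingSign c (f^[j] x)) / 2 ^ (h + 1)

namespace KneadAux

lemma sign_abs_le (c x : ℝ) : |kneadingSign c x| ≤ 1 := by
  unfold kneadingSign; split_ifs <;> norm_num

lemma sign_eq_zero_iff {c x : ℝ} : kneadingSign c x = 0 ↔ x = c := by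
  unfold kneadingSign
  split_ifs with h1 h2
  · simp [h1]
  · simp [h1]
  · simp [h1]

lemma sign_eq_one_iff {c x : ℝ} : kneadingSign c x = 1 ↔ c < x := by
  unfold kneadingSign
  split_ifs with h1 h2
  · constructor
    · intro h; norm_num at h
    · intro h; rw [h1] at h; exact absurd h (lt_irrefl c)
  · simp [h2]
  · constructor
    · intro h; norm_num at h
    · intro h; exact absurd h h2

lemma sign_eq_neg_one_iff {c x : ℝ} : kneadingSign c x = -1 ↔ x < c := by
  unfold kneadingSign
  split_ifs with h1 h2
  · constructor
    · intro h; norm_num at h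
    · intro h; rw [h1] at h; exact absurd h (lt_irrefl c)
  · constructor
    · intro h; norm_num at h
    · intro h; exact absurd h (not_lt.mpr (le_of_lt h2))
  · simp only [iff_true_intro (lt_of_le_of_ne (not_lt.mp h2) h1)]

lemma prod_abs_le (c : ℝ) (g : ℕ → ℝ) (s : Finset ℕ) :
    |∏ j ∈ s, kneadingSign c (g j)| ≤ 1 := by
  rw [Finset.abs_prod]
  exact Finset.prod_le_one (fun _ _ => abs_nonneg _) (fun j _ => sign_abs_le c (g j))

lemma summable_aux (u : ℕ → ℝ) (C : ℝ) (hb : ∀ h, |u h| ≤ C) :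
    Summable (fun h : ℕ => u h / 2 ^ (h + 1)) := by
  apply Summable.of_norm_bounded (g := fun h : ℕ => C / 2 / 2 ^ h) (summable_geometric_two' C)
  intro h
  rw [Real.norm_eq_abs, abs_div, abs_pow, abs_two, div_div]
  rw [show (2:ℝ) * 2 ^ h = 2 ^ (h + 1) by ring]
  gcongr
  exact hb h

lemma summable_theta (f : ℝ → ℝ) (c x : ℝ) :
    Summable (fun h : ℕ => (∏ j ∈ Finset.range (h + 1), kneadingSign c (f^[j] x)) / 2 ^ (h + 1)) :=
  summable_aux _ 1 (fun h => prod_abs_le c _ _)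

lemma iter_mem {f : ℝ → ℝ} {I : Set ℝ} (hmap : Set.MapsTo f I I) {x : ℝ} (hx : x ∈ I) :
    ∀ m, f^[m] x ∈ I := by
  intro m
  induction m with
  | zero => simpa using hx
  | succ n ih => rw [Function.iterate_succ_apply']; exact hmap ih

lemma orient {f : ℝ → ℝ} {I : Set ℝ} {c : ℝ}
    (hmap : Set.MapsTo f I I)
    (hdec : StrictAntiOn f (I ∩ Set.Iic c))
    (hinc : StrictMonoOn f (I ∩ Set.Ici c))
    {x y : ℝ} (hx : x ∈ I) (hy : y ∈ I) (hxy : x < y) :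
    ∀ m, (∀ j < m, kneadingSign c (f^[j] x) = kneadingSign c (f^[j] y) ∧ f^[j] x ≠ c) →
    ((∏ j ∈ Finset.range m, kneadingSign c (f^[j] x)) = 1 ∧ f^[m] x < f^[m] y) ∨
    ((∏ j ∈ Finset.range m, kneadingSign c (f^[j] x)) = -1 ∧ f^[m] y < f^[m] x) := by
  intro m
  induction m with
  | zero => intro _; left; simpa using hxy
  | succ n ih =>
    intro hj
    have hjn : ∀ j < n, kneadingSign c (f^[j] x) = kneadingSign c (f^[j] y) ∧ f^[j] x ≠ c :=
      fun j hjlt => hj j (Nat.lt_succ_of_lt hjlt)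
    have hn := hj n (Nat.lt_succ_self n)
    have hmemx : f^[n] x ∈ I := iter_mem hmap hx n
    have hmemy : f^[n] y ∈ I := iter_mem hmap hy n
    have hprod : ∏ j ∈ Finset.range (n + 1), kneadingSign c (f^[j] x)
        = (∏ j ∈ Finset.range n, kneadingSign c (f^[j] x)) * kneadingSign c (f^[n] x) :=
      Finset.prod_range_succ _ n
    -- the sign at step n is ±1
    rcases lt_trichotomy (f^[n] x) c with hside | hside | hside
    · -- left side: sign = -1
      have hsx : kneadingSign c (f^[n] x) = -1 := sign_eq_neg_one_iff.mpr hside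
      have hsy : kneadingSign c (f^[n] y) = -1 := hn.1 ▸ hsx
      have hsidey : f^[n] y < c := sign_eq_neg_one_iff.mp hsy
      have hmx : f^[n] x ∈ I ∩ Set.Iic c := ⟨hmemx, le_of_lt hside⟩
      have hmy : f^[n] y ∈ I ∩ Set.Iic c := ⟨hmemy, le_of_lt hsidey⟩
      rcases ih hjn with ⟨hp, hlt⟩ | ⟨hp, hlt⟩
      · right
        constructor
        · rw [hprod, hp, hsx]; ring
        · rw [Function.iterate_succ_apply', Function.iterate_succ_apply']
          exact hdec hmx hmy hlt
      · left
        constructor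
        · rw [hprod, hp, hsx]; ring
        · rw [Function.iterate_succ_apply', Function.iterate_succ_apply']
          exact hdec hmy hmx hlt
    · exact absurd hside hn.2
    · -- right side: sign = 1
      have hsx : kneadingSign c (f^[n] x) = 1 := sign_eq_one_iff.mpr hside
      have hsy : kneadingSign c (f^[n] y) = 1 := hn.1 ▸ hsx
      have hsidey : c < f^[n] y := sign_eq_one_iff.mp hsy
      have hmx : f^[n] x ∈ I ∩ Set.Ici c := ⟨hmemx, le_of_lt hside⟩
      have hmy : f^[n] y ∈ I ∩ Set.Ici c := ⟨hmemy, le_of_lt hsidey⟩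
      rcases ih hjn with ⟨hp, hlt⟩ | ⟨hp, hlt⟩
      · left
        constructor
        · rw [hprod, hp, hsx]; ring
        · rw [Function.iterate_succ_apply', Function.iterate_succ_apply']
          exact hinc hmx hmy hlt
      · right
        constructor
        · rw [hprod, hp, hsx]; ring
        · rw [Function.iterate_succ_apply', Function.iterate_succ_apply']
          exact hinc hmy hmx hlt

lemma key {c a b : ℝ} (hab : a < b) (hne : kneadingSign c a ≠ kneadingSign c b) :
    (kneadingSign c b - kneadingSign c a = 1 ∧ (a = c ∨ b = c)) ∨
    (kneadingSign c b - kneadingSign c a = 2 ∧ a ≠ c ∧ b ≠ c) := by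
  rcases lt_trichotomy a c with h1 | h1 | h1
  · rcases lt_trichotomy b c with h2 | h2 | h2
    · exact absurd (by rw [sign_eq_neg_one_iff.mpr h1, sign_eq_neg_one_iff.mpr h2]) hne
    · left
      exact ⟨by rw [sign_eq_zero_iff.mpr h2, sign_eq_neg_one_iff.mpr h1]; ring, Or.inr h2⟩
    · right
      exact ⟨by rw [sign_eq_one_iff.mpr h2, sign_eq_neg_one_iff.mpr h1]; ring,
        ne_of_lt h1, ne_of_gt h2⟩
  · have h2 : c < b := h1 ▸ hab
    left
    exact ⟨by rw [sign_eq_one_iff.mpr h2, sign_eq_zero_iff.mpr h1]; ring, Or.inl h1⟩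
  · have h2 : c < b := lt_trans h1 hab
    exact absurd (by rw [sign_eq_one_iff.mpr h1, sign_eq_one_iff.mpr h2]) hne

end KneadAux

set_option maxHeartbeats 1000000 in
open KneadAux in
theorem stmt_16 (f : ℝ → ℝ) (I : Set ℝ) (hI : I.OrdConnected) (c : ℝ) (hc : c ∈ I)
    (hmap : Set.MapsTo f I I) (hcont : ContinuousOn f I)
    (hdec : StrictAntiOn f (I ∩ Set.Iic c))
    (hinc : StrictMonoOn f (I ∩ Set.Ici c)) :
    ∀ x ∈ I, ∀ y ∈ I, x < y → kneadingCoord f c x ≤ kneadingCoord f c y := by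
  intro x hx y hy hxy
  set θx : ℕ → ℝ := fun h => ∏ j ∈ Finset.range (h + 1), kneadingSign c (f^[j] x) with hθx
  set θy : ℕ → ℝ := fun h => ∏ j ∈ Finset.range (h + 1), kneadingSign c (f^[j] y) with hθy
  by_cases hall : ∀ m, kneadingSign c (f^[m] x) = kneadingSign c (f^[m] y)
  · apply le_of_eq
    unfold kneadingCoord
    exact tsum_congr fun h => by rw [Finset.prod_congr rfl fun j _ => hall j]
  · push_neg at hall
    have hex : ∃ m, kneadingSign c (f^[m] x) ≠ kneadingSign c (f^[m] y) := hall
    classical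
    obtain ⟨m, hm, hlt⟩ : ∃ m, kneadingSign c (f^[m] x) ≠ kneadingSign c (f^[m] y) ∧
        ∀ j < m, kneadingSign c (f^[j] x) = kneadingSign c (f^[j] y) := by
      refine ⟨Nat.find hex, Nat.find_spec hex, fun j hj => ?_⟩
      by_contra h
      exact Nat.find_min hex hj h
    have hnec : ∀ j < m, f^[j] x ≠ c := by
      intro j hj heq
      have h0 : kneadingSign c (f^[j] x) = 0 := sign_eq_zero_iff.mpr heq
      have h0y : kneadingSign c (f^[j] y) = 0 := (hlt j hj) ▸ h0
      have heqy : f^[j] y = c := sign_eq_zero_iff.mp h0y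
      have : f^[m] x = f^[m] y := by
        have h1 : f^[m] x = f^[m - j] (f^[j] x) := by
          rw [← Function.iterate_add_apply, Nat.sub_add_cancel (le_of_lt hj)]
        have h2 : f^[m] y = f^[m - j] (f^[j] y) := by
          rw [← Function.iterate_add_apply, Nat.sub_add_cancel (le_of_lt hj)]
        rw [h1, h2, heq, heqy]
      exact hm (by rw [this])
    have horient := orient hmap hdec hinc hx hy hxy m
      (fun j hj => ⟨hlt j hj, hnec j hj⟩)
    -- θ's agree before m
    have hθeq : ∀ h < m, θx h = θy h := by
      intro h hh
      exact Finset.prod_congr rfl fun j hj =>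
        hlt j (lt_of_lt_of_le (Finset.mem_range.mp hj) hh)
    set a := f^[m] x with ha_def
    set b := f^[m] y with hb_def
    have hprodx : θx m = (∏ j ∈ Finset.range m, kneadingSign c (f^[j] x)) * kneadingSign c a :=
      Finset.prod_range_succ _ m
    have hprody : θy m = (∏ j ∈ Finset.range m, kneadingSign c (f^[j] y)) * kneadingSign c b :=
      Finset.prod_range_succ _ m
    have hprodeq : (∏ j ∈ Finset.range m, kneadingSign c (f^[j] y))
        = (∏ j ∈ Finset.range m, kneadingSign c (f^[j] x)) :=
      (Finset.prod_congr rfl fun j hj => (hlt j (Finset.mem_range.mp hj)).symm)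
    set D := θy m - θx m with hD_def
    -- key facts
    have hfacts : 1 ≤ D ∧ (∀ h, m ≤ h → θx h = 0) ∨
        1 ≤ D ∧ (∀ h, m ≤ h → θy h = 0) ∨ D = 2 := by
      rcases horient with ⟨hp, hab⟩ | ⟨hp, hab⟩
      · -- ε = 1, a < b
        rcases key hab hm with ⟨hd, hzero⟩ | ⟨hd, _, _⟩
        · have hD1 : D = 1 := by
            rw [hD_def, hprodx, hprody, hprodeq, hp]; linarith
          rcases hzero with hac | hbc
          · left
            refine ⟨le_of_eq hD1.symm, fun h hh => ?_⟩
            exact Finset.prod_eq_zero (Finset.mem_range.mpr (Nat.lt_succ_of_le hh))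
              (sign_eq_zero_iff.mpr hac)
          · right; left
            refine ⟨le_of_eq hD1.symm, fun h hh => ?_⟩
            exact Finset.prod_eq_zero (Finset.mem_range.mpr (Nat.lt_succ_of_le hh))
              (sign_eq_zero_iff.mpr hbc)
        · right; right
          rw [hD_def, hprodx, hprody, hprodeq, hp]; linarith
      · -- ε = -1, b < a
        rcases key hab (Ne.symm hm) with ⟨hd, hzero⟩ | ⟨hd, _, _⟩
        · have hD1 : D = 1 := by
            rw [hD_def, hprodx, hprody, hprodeq, hp]; linarith
          rcases hzero with hbc | hac
          · right; left
            refine ⟨le_of_eq hD1.symm, fun h hh => ?_⟩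
            exact Finset.prod_eq_zero (Finset.mem_range.mpr (Nat.lt_succ_of_le hh))
              (sign_eq_zero_iff.mpr hbc)
          · left
            refine ⟨le_of_eq hD1.symm, fun h hh => ?_⟩
            exact Finset.prod_eq_zero (Finset.mem_range.mpr (Nat.lt_succ_of_le hh))
              (sign_eq_zero_iff.mpr hac)
        · right; right
          rw [hD_def, hprodx, hprody, hprodeq, hp]; linarith
    have hD1 : 1 ≤ D := by
      rcases hfacts with ⟨h, _⟩ | ⟨h, _⟩ | h
      · exact h
      · exact h
      · rw [h]; norm_num
    have hF2 : ∀ h, m ≤ h → -D ≤ θy h - θx h := by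
      intro h hh
      have hbx : |θx h| ≤ 1 := prod_abs_le c _ _
      have hby : |θy h| ≤ 1 := prod_abs_le c _ _
      rcases hfacts with ⟨_, hz⟩ | ⟨_, hz⟩ | h2
      · rw [hz h hh]
        have := abs_le.mp hby
        linarith
      · rw [hz h hh]
        have := abs_le.mp hbx
        linarith
      · rw [h2]
        have h1 := abs_le.mp hbx
        have h2 := abs_le.mp hby
        linarith
    -- summability
    have hsumx : Summable (fun h : ℕ => θx h / 2 ^ (h + 1)) := summable_theta f c x
    have hsumy : Summable (fun h : ℕ => θy h / 2 ^ (h + 1)) := summable_theta f c y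
    have hsumg : Summable (fun h : ℕ => (θy h - θx h) / 2 ^ (h + 1)) := by
      apply summable_aux _ 2
      intro h
      have h1 := abs_le.mp (prod_abs_le c (fun j => f^[j] x) (Finset.range (h+1)))
      have h2 := abs_le.mp (prod_abs_le c (fun j => f^[j] y) (Finset.range (h+1)))
      rw [abs_le]
      constructor <;> linarith
    -- final computation
    have hkx : kneadingCoord f c x = ∑' h, θx h / 2 ^ (h + 1) := by
      unfold kneadingCoord; simp only [hθx]
    have hky : kneadingCoord f c y = ∑' h, θy h / 2 ^ (h + 1) := by
      unfold kneadingCoord; simp only [hθy]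
    have hdiff : kneadingCoord f c y - kneadingCoord f c x
        = ∑' h, (θy h - θx h) / 2 ^ (h + 1) := by
      rw [hkx, hky, ← Summable.tsum_sub hsumy hsumx]
      congr 1; funext h; ring
    have hfin : ∑ h ∈ Finset.range (m + 1), (θy h - θx h) / 2 ^ (h + 1) = D / 2 ^ (m + 1) := by
      rw [Finset.sum_range_succ]
      have hz : ∑ h ∈ Finset.range m, (θy h - θx h) / 2 ^ (h + 1) = 0 := by
        apply Finset.sum_eq_zero; intro h hh
        rw [hθeq h (Finset.mem_range.mp hh)]; ring
      rw [hz, hD_def]; ring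
    have hshift : Summable (fun i : ℕ => (θy (i + (m + 1)) - θx (i + (m + 1))) / 2 ^ (i + (m + 1) + 1)) :=
      (summable_nat_add_iff (m + 1)).mpr hsumg
    have htail : -(D / 2 ^ (m + 1))
        ≤ ∑' i : ℕ, (θy (i + (m + 1)) - θx (i + (m + 1))) / 2 ^ (i + (m + 1) + 1) := by
      have heq1 : ∑' i : ℕ, -(D / 2 ^ (m + 1)) / 2 / 2 ^ i = -(D / 2 ^ (m + 1)) :=
        tsum_geometric_two' _
      rw [← heq1]
      apply Summable.tsum_le_tsum _ (summable_geometric_two' _) hshift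
      intro i
      have h1 : -(D / 2 ^ (m + 1)) / 2 / 2 ^ i = (-D) / 2 ^ (i + (m + 1) + 1) := by
        have hp : (2:ℝ) ^ (i + (m + 1) + 1) = 2 ^ (m + 1) * 2 * 2 ^ i := by
          rw [pow_add, pow_add, pow_one]; ring
        rw [hp]
        field_simp
      rw [h1]
      gcongr
      exact hF2 (i + (m + 1)) (by omega)
    have hnn : 0 ≤ kneadingCoord f c y - kneadingCoord f c x := by
      rw [hdiff, ← Summable.sum_add_tsum_nat_add (m + 1) hsumg, hfin]
      linarith [htail]
    linarith
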